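/- arXiv:1304.6815 — 2 statements merged into one kernel-verified Lean document; each statement's English description precedes it below -/
import Mathlib

section
/- Let S̃ be a real skew-symmetric n×n matrix and S = i·S̃. Then there exists a real symmetric n×n matrix Ξ₁ such that Ξ₁ + S is positive semidefinite (as a complex Hermitian matrix) and rank(Ξ₁ + S) = (1/2)·rank(S̃). -/
open Matrix ComplexOrder

section Stmt5Aux

variable {n : Type*} [Fintype n] [DecidableEq n]

private lemma stmt5_rank_conj {K : Type*} [Field K] (U D V : Matrix n n K)
    (hU : IsUnit U.det) (hV : IsUnit V.det) : (U * D * V).rank = D.rank := by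
  rw [Matrix.rank_mul_eq_left_of_isUnit_det V (U * D) hV,
    Matrix.rank_mul_eq_right_of_isUnit_det U D hU]

private lemma stmt5_map_mul (M N : Matrix n n ℝ) :
    (M * N).map (Complex.ofReal ·) = M.map (Complex.ofReal ·) * N.map (Complex.ofReal ·) :=
  Matrix.map_mul (f := Complex.ofRealHom)

private lemma stmt5_det_map (M : Matrix n n ℝ) (h : IsUnit M.det) :
    IsUnit (M.map (Complex.ofReal ·)).det := by
  have : (M.map (Complex.ofReal ·)).det = Complex.ofRealHom M.det :=
    (RingHom.map_det Complex.ofRealHom M).symm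
  rw [this, isUnit_iff_ne_zero]
  simp only [Complex.ofRealHom_eq_coe, Ne, Complex.ofReal_eq_zero]
  exact fun hh => by simp [hh] at h

private lemma stmt5_rank_map (M : Matrix n n ℝ) (hM : M.IsHermitian) :
    (M.map (Complex.ofReal ·)).rank = M.rank := by
  classical
  have spec : M = (hM.eigenvectorUnitary : Matrix n n ℝ) * diagonal (RCLike.ofReal ∘ hM.eigenvalues) *
      star (hM.eigenvectorUnitary : Matrix n n ℝ) := hM.spectral_theorem
  set V : Matrix n n ℝ := (hM.eigenvectorUnitary : Matrix n n ℝ) with hV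
  set d : n → ℝ := hM.eigenvalues with hd
  have hdet : IsUnit V.det := Matrix.UnitaryGroup.det_isUnit hM.eigenvectorUnitary
  have hdetstar : IsUnit (star V).det := by
    rw [Matrix.star_eq_conjTranspose, Matrix.det_conjTranspose]
    exact hdet.star
  have hdiag : (RCLike.ofReal ∘ d : n → ℝ) = d := rfl
  have h1 : M.rank = Fintype.card {i // d i ≠ 0} := by
    conv_lhs => rw [spec]
    rw [stmt5_rank_conj _ _ _ hdet hdetstar, hdiag, Matrix.rank_diagonal]
  have h2 : M.map (Complex.ofReal ·) =
      V.map (Complex.ofReal ·) * diagonal (fun i => (d i : ℂ)) *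
        (star V).map (Complex.ofReal ·) := by
    conv_lhs => rw [spec]
    rw [stmt5_map_mul, stmt5_map_mul, hdiag,
      Matrix.diagonal_map (by simp : (Complex.ofReal 0 : ℂ) = 0)]
  rw [h2, stmt5_rank_conj _ _ _ (stmt5_det_map _ hdet) (stmt5_det_map _ hdetstar),
    Matrix.rank_diagonal, h1]
  exact Fintype.card_congr (Equiv.subtypeEquivRight fun i => by
    simp [Complex.ofReal_ne_zero])

private lemma stmt5_abs_add (x : ℝ) : |x| + x ≠ 0 ↔ 0 < x := by
  rcases le_or_gt x 0 with h | h
  · simp [abs_of_nonpos h, h.not_gt]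
  · have : 0 < |x| + x := by have := abs_nonneg x; linarith
    simp [this.ne', h]

private lemma stmt5_abs_sub (x : ℝ) : |x| - x ≠ 0 ↔ x < 0 := by
  rcases lt_or_ge x 0 with h | h
  · have : 0 < |x| - x := by have := abs_pos.mpr h.ne; linarith
    simp [this.ne', h]
  · simp [abs_of_nonneg h, h.not_gt]

private lemma stmt5_card_split (lam : n → ℝ) :
    Fintype.card {i // lam i ≠ 0} =
      Fintype.card {i // 0 < lam i} + Fintype.card {i // lam i < 0} := by
  classical
  simp only [Fintype.card_subtype]
  have h : ∀ i, lam i ≠ 0 ↔ (0 < lam i ∨ lam i < 0) := by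
    intro i
    constructor
    · intro hi; rcases hi.lt_or_gt with h' | h'
      · exact Or.inr h'
      · exact Or.inl h'
    · rintro (h' | h') <;> [exact h'.ne'; exact h'.ne]
  rw [show (Finset.univ.filter fun i => lam i ≠ 0) =
      Finset.univ.filter fun i => (0 < lam i ∨ lam i < 0) from
    Finset.filter_congr fun i _ => by rw [h i]]
  rw [Finset.filter_or]
  exact Finset.card_union_of_disjoint (by
    rw [Finset.disjoint_filter]
    exact fun i _ h1 h2 => absurd h2 (lt_asymm h1))

end Stmt5Aux

theorem stmt_5 {n : Type*} [Fintype n] [DecidableEq n] (St : Matrix n n ℝ)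
    (hskew : Stᵀ = -St) :
    ∃ Ξ₁ : Matrix n n ℝ, Ξ₁ᵀ = Ξ₁ ∧
      (Ξ₁.map (Complex.ofReal ·) + Complex.I • St.map (Complex.ofReal ·)).PosSemidef ∧
      2 * (Ξ₁.map (Complex.ofReal ·) + Complex.I • St.map (Complex.ofReal ·)).rank = St.rank := by
  classical
  have hST : ∀ i j, St j i = -St i j := fun i j => by
    have := congrFun (congrFun hskew i) j
    simpa [Matrix.transpose_apply] using this
  set Sc : Matrix n n ℂ := St.map (Complex.ofReal ·) with hScdef
  set H : Matrix n n ℂ := Complex.I • Sc with hHdef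
  have hScT : Scᵀ = -Sc := by
    ext i j
    simp only [hScdef, Matrix.transpose_apply, Matrix.map_apply, Matrix.neg_apply]
    rw [hST i j]
    push_cast
    ring
  have hHherm : H.IsHermitian := by
    unfold Matrix.IsHermitian
    ext i j
    simp only [hHdef, hScdef, Matrix.conjTranspose_apply, Matrix.smul_apply,
      Matrix.map_apply, smul_eq_mul, star_mul', star_neg, Complex.star_def,
      Complex.conj_I, Complex.conj_ofReal]
    rw [hST i j]
    push_cast
    ring
  set lam : n → ℝ := hHherm.eigenvalues with hlam
  set U : Matrix n n ℂ := (hHherm.eigenvectorUnitary : Matrix n n ℂ) with hU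
  have hUdet : IsUnit U.det := Matrix.UnitaryGroup.det_isUnit hHherm.eigenvectorUnitary
  have hUstar_det : IsUnit (star U).det := by
    rw [Matrix.star_eq_conjTranspose, Matrix.det_conjTranspose]
    exact hUdet.star
  have hUU : star U * U = 1 := hHherm.eigenvectorUnitary.2.1
  have spec : H = U * diagonal (fun i => (lam i : ℂ)) * star U := hHherm.spectral_theorem
  have hm : ∀ E F : n → ℂ, (U * diagonal E * star U) * (U * diagonal F * star U)
      = U * diagonal (fun i => E i * F i) * star U := by
    intro E F
    have h1 : (U * diagonal E * star U) * (U * diagonal F * star U)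
        = U * diagonal E * ((star U * U) * (diagonal F * star U)) := by
      simp only [Matrix.mul_assoc]
    rw [h1, hUU, one_mul, ← Matrix.diagonal_mul_diagonal]
    simp only [Matrix.mul_assoc]
  set Xc : Matrix n n ℂ := U * diagonal (fun i => ((|lam i| : ℝ) : ℂ)) * star U with hXcdef
  have hXcpsd : Xc.PosSemidef := by
    have hD1 : (diagonal (fun i => ((|lam i| : ℝ) : ℂ))).PosSemidef :=
      Matrix.posSemidef_diagonal_iff.mpr fun i => Complex.zero_le_real.mpr (abs_nonneg _)
    have := hD1.mul_mul_conjTranspose_same U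
    rwa [← Matrix.star_eq_conjTranspose] at this
  have hA : Xc + H = U * diagonal (fun i => ((|lam i| + lam i : ℝ) : ℂ)) * star U := by
    conv_lhs => rw [hXcdef, spec]
    rw [← Matrix.add_mul, ← Matrix.mul_add, Matrix.diagonal_add]
    push_cast
    rfl
  have hApsd : (Xc + H).PosSemidef := by
    rw [hA]
    have hD1 : (diagonal (fun i => ((|lam i| + lam i : ℝ) : ℂ))).PosSemidef :=
      Matrix.posSemidef_diagonal_iff.mpr fun i =>
        Complex.zero_le_real.mpr (by have := neg_abs_le (lam i); linarith)
    have := hD1.mul_mul_conjTranspose_same U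
    rwa [← Matrix.star_eq_conjTranspose] at this
  have hsq : Xc * Xc = H * H := by
    conv_lhs => rw [hXcdef, hm]
    conv_rhs => rw [spec, hm]
    have : (fun i => ((|lam i| : ℝ) : ℂ) * ((|lam i| : ℝ) : ℂ))
        = fun i => ((lam i : ℝ) : ℂ) * ((lam i : ℝ) : ℂ) := by
      funext i
      rw [← Complex.ofReal_mul, ← Complex.ofReal_mul, abs_mul_abs_self]
    rw [this]
  have hHHreal : (H * H).map (starRingEnd ℂ) = H * H := by
    have hform : H * H = ((-(St * St)).map (Complex.ofReal ·)) := by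
      rw [hHdef, Matrix.smul_mul, Matrix.mul_smul, smul_smul, Complex.I_mul_I, hScdef,
        ← stmt5_map_mul]
      ext i j
      simp [Matrix.map_apply]
    rw [hform]
    ext i j
    simp [Matrix.map_apply, Complex.conj_ofReal]
  have hXconj : Xc.map (starRingEnd ℂ) = Xc := by
    have hBeq : Xc.map (starRingEnd ℂ) = Xcᵀ := by
      ext i j
      have := congrFun (congrFun hXcpsd.1 j) i
      simp only [Matrix.conjTranspose_apply] at this
      simp only [Matrix.map_apply, Matrix.transpose_apply]
      rw [← this]
      rfl
    have hBpsd : (Xc.map (starRingEnd ℂ)).PosSemidef := by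
      rw [hBeq]; exact hXcpsd.transpose
    have hBsq : (Xc.map (starRingEnd ℂ)) ^ 2 = Xc ^ 2 := by
      rw [pow_two, pow_two, ← Matrix.map_mul (f := (starRingEnd ℂ)), hsq, hHHreal, ← hsq]
    exact (open scoped MatrixOrder in (CFC.sq_eq_sq_iff _ _ hBpsd.nonneg hXcpsd.nonneg).mp hBsq)
  have hXcT : Xcᵀ = Xc := by
    ext i j
    have h1 := congrFun (congrFun hXcpsd.1 i) j
    simp only [Matrix.conjTranspose_apply] at h1
    have h2 := congrFun (congrFun hXconj j) i
    simp only [Matrix.map_apply] at h2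
    simp only [Matrix.transpose_apply]
    exact h2 ▸ h1
  refine ⟨Xc.map Complex.re, ?_, ?_, ?_⟩
  · ext i j
    simp only [Matrix.transpose_apply, Matrix.map_apply]
    rw [show Xc j i = Xcᵀ i j from rfl, hXcT]
  · have hX1map : (Xc.map Complex.re).map (Complex.ofReal ·) = Xc := by
      ext i j
      have := congrFun (congrFun hXconj i) j
      simp only [Matrix.map_apply] at this ⊢
      exact Complex.conj_eq_iff_re.mp this
    rw [hX1map]
    exact hApsd
  · have hX1map : (Xc.map Complex.re).map (Complex.ofReal ·) = Xc := by
      ext i j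
      have := congrFun (congrFun hXconj i) j
      simp only [Matrix.map_apply] at this ⊢
      exact Complex.conj_eq_iff_re.mp this
    rw [hX1map]
    -- rank computations
    have hrankA : (Xc + H).rank = Fintype.card {i // 0 < lam i} := by
      rw [hA, stmt5_rank_conj _ _ _ hUdet hUstar_det, Matrix.rank_diagonal]
      exact Fintype.card_congr (Equiv.subtypeEquivRight fun i => by
        rw [Ne, Complex.ofReal_eq_zero, ← Ne, stmt5_abs_add])
    have hHT : Hᵀ = -H := by
      rw [hHdef, Matrix.transpose_smul, hScT, smul_neg]
    have hAT : (Xc + H)ᵀ = Xc - H := by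
      rw [Matrix.transpose_add, hXcT, hHT, sub_eq_add_neg]
    have hXmH : Xc - H = U * diagonal (fun i => ((|lam i| - lam i : ℝ) : ℂ)) * star U := by
      conv_lhs => rw [hXcdef, spec]
      rw [← Matrix.sub_mul, ← Matrix.mul_sub, Matrix.diagonal_sub]
      push_cast
      rfl
    have hrankAT : (Xc - H).rank = Fintype.card {i // lam i < 0} := by
      rw [hXmH, stmt5_rank_conj _ _ _ hUdet hUstar_det, Matrix.rank_diagonal]
      exact Fintype.card_congr (Equiv.subtypeEquivRight fun i => by
        rw [Ne, Complex.ofReal_eq_zero, ← Ne, stmt5_abs_sub])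
    have hpq : Fintype.card {i // 0 < lam i} = Fintype.card {i // lam i < 0} := by
      rw [← hrankA, ← hrankAT, ← hAT, Matrix.rank_transpose]
    have hrankH : H.rank = Fintype.card {i // lam i ≠ 0} := by
      rw [spec, stmt5_rank_conj _ _ _ hUdet hUstar_det, Matrix.rank_diagonal]
      exact Fintype.card_congr (Equiv.subtypeEquivRight fun i => by
        rw [Ne, Complex.ofReal_eq_zero])
    have hrankHSc : H.rank = Sc.rank := by
      rw [hHdef, Matrix.smul_eq_diagonal_mul, Matrix.rank_mul_eq_right_of_isUnit_det]
      rw [Matrix.det_diagonal, isUnit_iff_ne_zero]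
      exact Finset.prod_ne_zero_iff.mpr fun i _ => Complex.I_ne_zero
    have hrankSc : Sc.rank = St.rank := by
      have h1 : Scᴴ = Stᵀ.map (Complex.ofReal ·) := by
        ext i j
        simp [hScdef, Matrix.conjTranspose_apply, Matrix.map_apply, Complex.conj_ofReal]
      calc Sc.rank = (Scᴴ * Sc).rank := (Matrix.rank_conjTranspose_mul_self Sc).symm
        _ = ((Stᵀ * St).map (Complex.ofReal ·)).rank := by rw [h1, hScdef, ← stmt5_map_mul]
        _ = (Stᵀ * St).rank := stmt5_rank_map _ (Matrix.isHermitian_conjTranspose_mul_self St)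
        _ = St.rank := Matrix.rank_transpose_mul_self St
    rw [hrankA, two_mul]
    nth_rewrite 2 [hpq]
    rw [← stmt5_card_split lam, ← hrankH, hrankHSc, hrankSc]
end

section
/- Let S be a Hermitian matrix of the form S = iS̃ with S̃ real skew-symmetric, and let Ξ₂ = Λ†Λ for some complex matrix Λ, where the imaginary part of Ξ₂ equals (1/4)S̃ (i.e., Ξ₂ = Ξ₁ + (i/4)S̃ with Ξ₁ = Re(Ξ₂) real). Then the number of rows of Λ is at least (1/2)·rank(S̃). -/
open Matrix

theorem stmt_15 {n : Type*} [Fintype n] [DecidableEq n] {m : ℕ}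
    (St : Matrix n n ℝ) (hskew : Stᵀ = -St)
    (Λ : Matrix (Fin m) n ℂ)
    (him : ∀ i j, ((Λᴴ * Λ) i j).im = St i j / 4) :
    St.rank ≤ 2 * m := by
  set A : Matrix (Fin m) n ℝ := fun i j => 4 * (Λ i j).re with hA
  set B : Matrix (Fin m) n ℝ := fun i j => (Λ i j).im with hB
  have hSt : St = fromCols Aᵀ Bᵀ * fromRows B (-A) := by
    rw [fromCols_mul_fromRows]
    ext i j
    have h := him i j
    have : ((Λᴴ * Λ) i j).im = ∑ k, ((Λ k i).re * (Λ k j).im - (Λ k i).im * (Λ k j).re) := by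
      simp [Matrix.mul_apply, Complex.im_sum, Matrix.conjTranspose_apply, Complex.mul_im]
      rw [Finset.sum_add_distrib, Finset.sum_neg_distrib, ← sub_eq_add_neg]
    rw [this] at h
    have h4 : St i j = 4 * ∑ k, ((Λ k i).re * (Λ k j).im - (Λ k i).im * (Λ k j).re) := by
      linarith
    simp only [Matrix.add_apply, Matrix.neg_apply, Matrix.mul_apply,
      Matrix.transpose_apply, hA, hB, h4, Finset.mul_sum, ← Finset.sum_add_distrib]
    change _ = ∑ k, (4 * (Λ k i).re) * (Λ k j).im + _
    rw [← Finset.sum_add_distrib]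
    apply Finset.sum_congr rfl
    intro k _
    show _ = 4 * (Λ k i).re * (Λ k j).im + (Λ k i).im * -(4 * (Λ k j).re)
    ring
  calc St.rank ≤ Fintype.card (Fin m ⊕ Fin m) := by
        rw [hSt]
        exact le_trans (Matrix.rank_mul_le_right _ _) (Matrix.rank_le_card_height _)
    _ = 2 * m := by simp [two_mul]
end
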